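/- Let x₁,x₂,x₃,x₄ be a 4-cycle in a d-regular graph with uniform measure μ. Set ρᵢ = ρ(xᵢ) > 0, gᵢ = ψ(x_{i+1})−ψ(xᵢ) (cyclic mod 4), and D(s,t;u,v) = u∂₁θ(s,t)+v∂₂θ(s,t)−θ(u,v). Then B^off_□(ρ,ψ) := (μ/d²) Σ_{i=1}^4 [ (1/2)gᵢ²(∂₁θ(ρᵢ,ρ_{i+1})(ρ_{i−1}−ρᵢ) + ∂₂θ(ρᵢ,ρ_{i+1})(ρ_{i+2}−ρ_{i+1})) − gᵢ(g_{i+1}+g_{i−1})θ(ρᵢ,ρ_{i+1}) ] equals (μ/(2d²))·(g₁+g₃)²·Σ_{i=1}^4 θ(ρᵢ,ρ_{i+1}) + (μ/(2d²))·Σ_{i=1}^4 gᵢ²·D(ρᵢ,ρ_{i+1};ρ_{i−1},ρ_{i+2}); in particular B^off_□(ρ,ψ) ≥ 0. -/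

import Mathlib

/-- The logarithmic mean `θ(s,t) = ∫₀¹ s^(1-p) t^p dp`. -/
noncomputable def logMean (s t : ℝ) : ℝ := ∫ p in (0:ℝ)..1, s ^ (1 - p) * t ^ p

/-- Partial derivative of the logarithmic mean in the first argument. -/
noncomputable def logMean₁ (s t : ℝ) : ℝ := deriv (fun u => logMean u t) s

/-- Partial derivative of the logarithmic mean in the second argument. -/
noncomputable def logMean₂ (s t : ℝ) : ℝ := deriv (fun v => logMean s v) t

/-- The deficit `D(s,t;u,v) = u ∂₁θ(s,t) + v ∂₂θ(s,t) - θ(u,v)` in the four-point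
inequality for the logarithmic mean. -/
noncomputable def logMeanDeficit (s t u v : ℝ) : ℝ :=
  u * logMean₁ s t + v * logMean₂ s t - logMean u v

open MeasureTheory Real

lemma contRpow {x : ℝ} (hx : x ≠ 0) {f : ℝ → ℝ} (hf : Continuous f) :
    Continuous fun p => x ^ (f p) :=
  Continuous.rpow continuous_const hf (fun _ => Or.inl hx)

lemma cont_integrand {s t : ℝ} (hs : s ≠ 0) (ht : t ≠ 0) :
    Continuous fun p : ℝ => s ^ (1 - p) * t ^ p :=
  ((contRpow hs (by continuity)).mul (contRpow ht continuous_id))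

lemma logMean_nonneg {s t : ℝ} (hs : 0 < s) (ht : 0 < t) : 0 ≤ logMean s t := by
  refine intervalIntegral.integral_nonneg (by norm_num) (fun p _ => ?_)
  positivity

lemma logMean_symm (s t : ℝ) : logMean s t = logMean t s := by
  unfold logMean
  have h := intervalIntegral.integral_comp_sub_left (a := (0:ℝ)) (b := 1)
      (fun p => t ^ (1 - p) * s ^ p) 1
  norm_num at h
  rw [← h]
  congr 1
  funext p
  exact mul_comm _ _

lemma hasDerivAt_logMean_fst {s t : ℝ} (hs : 0 < s) (ht : 0 < t) :
    HasDerivAt (fun u => logMean u t)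
      (∫ p in (0:ℝ)..1, ((1 - p) * s ^ (-p)) * t ^ p) s := by
  have key := intervalIntegral.hasDerivAt_integral_of_dominated_loc_of_deriv_le
    (F := fun (x : ℝ) (p : ℝ) => x ^ (1 - p) * t ^ p)
    (F' := fun (x : ℝ) (p : ℝ) => ((1 - p) * x ^ (-p)) * t ^ p)
    (x₀ := s) (a := 0) (b := 1) (μ := volume)
    (bound := fun _ => Real.exp (|Real.log (s/2)| + |Real.log (3*s/2)|) * Real.exp |Real.log t|)
    (s := Metric.ball s (s/2)) (Metric.ball_mem_nhds _ (by positivity))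
    ?_ ?_ ?_ ?_ ?_ ?_
  · exact key.2
  · filter_upwards [eventually_gt_nhds hs] with x hx
    exact (cont_integrand hx.ne' ht.ne').aestronglyMeasurable
  · exact (cont_integrand hs.ne' ht.ne').intervalIntegrable _ _
  · exact (((by continuity : Continuous fun p:ℝ => 1-p).mul
      (contRpow hs.ne' (by continuity : Continuous fun p:ℝ => -p))).mul
      (contRpow ht.ne' continuous_id)).aestronglyMeasurable
  · refine Filter.Eventually.of_forall (fun p hp x hx => ?_)
    rw [Set.uIoc_of_le (by norm_num : (0:ℝ) ≤ 1)] at hp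
    rw [Metric.mem_ball, Real.dist_eq, abs_lt] at hx
    have hx0 : 0 < x := by linarith [hx.1]
    have hx1 : s/2 ≤ x := by linarith [hx.1]
    have hx2 : x ≤ 3*s/2 := by linarith [hx.2]
    have hL : |Real.log x| ≤ |Real.log (s/2)| + |Real.log (3*s/2)| := by
      rw [abs_le]
      refine ⟨?_, ?_⟩
      · have h1 := Real.log_le_log (by positivity) hx1
        have h2 := neg_abs_le (Real.log (s/2))
        have h3 := abs_nonneg (Real.log (3*s/2))
        linarith
      · have h1 := Real.log_le_log hx0 hx2
        have h2 := le_abs_self (Real.log (3*s/2))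
        have h3 := abs_nonneg (Real.log (s/2))
        linarith
    have hp0 : 0 < p := hp.1
    have hp1 : p ≤ 1 := hp.2
    rw [Real.norm_eq_abs, abs_mul, abs_mul]
    have e1 : |x ^ (-p)| = Real.exp (Real.log x * (-p)) := by
      rw [Real.rpow_def_of_pos hx0]; exact abs_of_pos (Real.exp_pos _)
    have e2 : |t ^ p| = Real.exp (Real.log t * p) := by
      rw [Real.rpow_def_of_pos ht]; exact abs_of_pos (Real.exp_pos _)
    rw [e1, e2]
    have h1 : |1 - p| ≤ 1 := by rw [abs_le]; constructor <;> linarith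
    have h2 : Real.exp (Real.log x * (-p)) ≤
        Real.exp (|Real.log (s/2)| + |Real.log (3*s/2)|) := by
      apply Real.exp_le_exp.mpr
      nlinarith [neg_abs_le (Real.log x), abs_nonneg (Real.log x)]
    have h3 : Real.exp (Real.log t * p) ≤ Real.exp |Real.log t| := by
      apply Real.exp_le_exp.mpr
      nlinarith [le_abs_self (Real.log t), abs_nonneg (Real.log t)]
    calc |1 - p| * Real.exp (Real.log x * (-p)) * Real.exp (Real.log t * p)
        ≤ 1 * Real.exp (|Real.log (s/2)| + |Real.log (3*s/2)|) * Real.exp |Real.log t| := by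
          exact mul_le_mul (mul_le_mul h1 h2 (Real.exp_pos _).le (by norm_num)) h3
            (Real.exp_pos _).le (by positivity)
      _ = _ := by ring
  · exact intervalIntegrable_const
  · refine Filter.Eventually.of_forall (fun p _ x hx => ?_)
    rw [Metric.mem_ball, Real.dist_eq, abs_lt] at hx
    have hx0 : 0 < x := by linarith [hx.1]
    have h := (Real.hasDerivAt_rpow_const (p := 1-p) (Or.inl hx0.ne')).mul_const (t ^ p)
    have hq : (1:ℝ) - p - 1 = -p := by ring
    rwa [hq] at h

lemma hasDerivAt_logMean_snd {s t : ℝ} (hs : 0 < s) (ht : 0 < t) :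
    HasDerivAt (fun v => logMean s v)
      (∫ p in (0:ℝ)..1, s ^ (1 - p) * (p * t ^ (p - 1))) t := by
  have key := intervalIntegral.hasDerivAt_integral_of_dominated_loc_of_deriv_le
    (F := fun (x : ℝ) (p : ℝ) => s ^ (1 - p) * x ^ p)
    (F' := fun (x : ℝ) (p : ℝ) => s ^ (1 - p) * (p * x ^ (p - 1)))
    (x₀ := t) (a := 0) (b := 1) (μ := volume)
    (bound := fun _ => Real.exp |Real.log s| *
      Real.exp (|Real.log (t/2)| + |Real.log (3*t/2)|))
    (s := Metric.ball t (t/2)) (Metric.ball_mem_nhds _ (by positivity))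
    ?_ ?_ ?_ ?_ ?_ ?_
  · exact key.2
  · filter_upwards [eventually_gt_nhds ht] with x hx
    exact (cont_integrand hs.ne' hx.ne').aestronglyMeasurable
  · exact (cont_integrand hs.ne' ht.ne').intervalIntegrable _ _
  · exact ((contRpow hs.ne' (by continuity : Continuous fun p:ℝ => 1-p)).mul
      (continuous_id.mul (contRpow ht.ne' (by continuity : Continuous fun p:ℝ => p-1)))).aestronglyMeasurable
  · refine Filter.Eventually.of_forall (fun p hp x hx => ?_)
    rw [Set.uIoc_of_le (by norm_num : (0:ℝ) ≤ 1)] at hp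
    rw [Metric.mem_ball, Real.dist_eq, abs_lt] at hx
    have hx0 : 0 < x := by linarith [hx.1]
    have hx1 : t/2 ≤ x := by linarith [hx.1]
    have hx2 : x ≤ 3*t/2 := by linarith [hx.2]
    have hL : |Real.log x| ≤ |Real.log (t/2)| + |Real.log (3*t/2)| := by
      rw [abs_le]
      refine ⟨?_, ?_⟩
      · have h1 := Real.log_le_log (by positivity) hx1
        have h2 := neg_abs_le (Real.log (t/2))
        have h3 := abs_nonneg (Real.log (3*t/2))
        linarith
      · have h1 := Real.log_le_log hx0 hx2
        have h2 := le_abs_self (Real.log (3*t/2))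
        have h3 := abs_nonneg (Real.log (t/2))
        linarith
    have hp0 : 0 < p := hp.1
    have hp1 : p ≤ 1 := hp.2
    rw [Real.norm_eq_abs, abs_mul, abs_mul]
    have e1 : |s ^ (1 - p)| = Real.exp (Real.log s * (1 - p)) := by
      rw [Real.rpow_def_of_pos hs]; exact abs_of_pos (Real.exp_pos _)
    have e2 : |x ^ (p - 1)| = Real.exp (Real.log x * (p - 1)) := by
      rw [Real.rpow_def_of_pos hx0]; exact abs_of_pos (Real.exp_pos _)
    rw [e1, e2]
    have h1 : Real.exp (Real.log s * (1 - p)) ≤ Real.exp |Real.log s| := by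
      apply Real.exp_le_exp.mpr
      nlinarith [le_abs_self (Real.log s), neg_abs_le (Real.log s), abs_nonneg (Real.log s)]
    have h2 : Real.exp (Real.log x * (p - 1)) ≤
        Real.exp (|Real.log (t/2)| + |Real.log (3*t/2)|) := by
      apply Real.exp_le_exp.mpr
      nlinarith [neg_abs_le (Real.log x), le_abs_self (Real.log x), abs_nonneg (Real.log x)]
    have h3 : |p| * Real.exp (Real.log x * (p - 1)) ≤
        Real.exp (|Real.log (t/2)| + |Real.log (3*t/2)|) := by
      have : |p| ≤ 1 := by rw [abs_le]; constructor <;> linarith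
      calc |p| * Real.exp (Real.log x * (p - 1))
          ≤ 1 * Real.exp (|Real.log (t/2)| + |Real.log (3*t/2)|) :=
            mul_le_mul this h2 (Real.exp_pos _).le (by norm_num)
        _ = _ := one_mul _
    exact mul_le_mul h1 h3 (by positivity) (Real.exp_pos _).le
  · exact intervalIntegrable_const
  · refine Filter.Eventually.of_forall (fun p _ x hx => ?_)
    rw [Metric.mem_ball, Real.dist_eq, abs_lt] at hx
    have hx0 : 0 < x := by linarith [hx.1]
    exact (Real.hasDerivAt_rpow_const (p := p) (Or.inl hx0.ne')).const_mul (s ^ (1 - p))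

lemma logMean₁_eq {s t : ℝ} (hs : 0 < s) (ht : 0 < t) :
    logMean₁ s t = ∫ p in (0:ℝ)..1, ((1 - p) * s ^ (-p)) * t ^ p :=
  (hasDerivAt_logMean_fst hs ht).deriv

lemma logMean₂_eq {s t : ℝ} (hs : 0 < s) (ht : 0 < t) :
    logMean₂ s t = ∫ p in (0:ℝ)..1, s ^ (1 - p) * (p * t ^ (p - 1)) :=
  (hasDerivAt_logMean_snd hs ht).deriv

lemma cont_D1 {s t : ℝ} (hs : 0 < s) (ht : 0 < t) :
    Continuous fun p : ℝ => ((1 - p) * s ^ (-p)) * t ^ p :=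
  ((by continuity : Continuous fun p:ℝ => 1-p).mul
      (contRpow hs.ne' (by continuity : Continuous fun p:ℝ => -p))).mul
      (contRpow ht.ne' continuous_id)

lemma cont_D2 {s t : ℝ} (hs : 0 < s) (ht : 0 < t) :
    Continuous fun p : ℝ => s ^ (1 - p) * (p * t ^ (p - 1)) :=
  (contRpow hs.ne' (by continuity : Continuous fun p:ℝ => 1-p)).mul
      (continuous_id.mul (contRpow ht.ne' (by continuity : Continuous fun p:ℝ => p-1)))

lemma euler_logMean {s t : ℝ} (hs : 0 < s) (ht : 0 < t) :
    s * logMean₁ s t + t * logMean₂ s t = logMean s t := by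
  rw [logMean₁_eq hs ht, logMean₂_eq hs ht,
    ← intervalIntegral.integral_const_mul, ← intervalIntegral.integral_const_mul,
    ← intervalIntegral.integral_add
      (((cont_D1 hs ht).const_mul s).intervalIntegrable _ _)
      (((cont_D2 hs ht).const_mul t).intervalIntegrable _ _)]
  unfold logMean
  congr 1
  funext p
  have e1 : s ^ (1 - p) = s * s ^ (-p) := by
    have h := Real.rpow_add hs 1 (-p)
    rw [Real.rpow_one] at h
    rw [show (1:ℝ) + -p = 1 - p from by ring] at h
    exact h
  have e2 : t ^ p = t * t ^ (p - 1) := by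
    have h := Real.rpow_add ht 1 (p - 1)
    rw [Real.rpow_one] at h
    rw [show (1:ℝ) + (p - 1) = p from by ring] at h
    exact h
  rw [e1, e2]
  ring

lemma logMeanDeficit_nonneg {s t u v : ℝ} (hs : 0 < s) (ht : 0 < t)
    (hu : 0 < u) (hv : 0 < v) : 0 ≤ logMeanDeficit s t u v := by
  unfold logMeanDeficit
  rw [sub_nonneg, logMean₁_eq hs ht, logMean₂_eq hs ht,
    ← intervalIntegral.integral_const_mul, ← intervalIntegral.integral_const_mul,
    ← intervalIntegral.integral_add
      (((cont_D1 hs ht).const_mul u).intervalIntegrable _ _)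
      (((cont_D2 hs ht).const_mul v).intervalIntegrable _ _)]
  unfold logMean
  apply intervalIntegral.integral_mono_on (by norm_num)
    ((cont_integrand hu.ne' hv.ne').intervalIntegrable _ _)
    ((((cont_D1 hs ht).const_mul u).add
      ((cont_D2 hs ht).const_mul v)).intervalIntegrable _ _)
  intro p hp
  obtain ⟨hp0, hp1⟩ := hp
  have hgm := Real.geom_mean_le_arith_mean2_weighted (by linarith : (0:ℝ) ≤ 1 - p) hp0
    (by positivity : (0:ℝ) ≤ u * (s ^ (-p) * t ^ p))
    (by positivity : (0:ℝ) ≤ v * (s ^ (1 - p) * t ^ (p - 1))) (by ring)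
  have key : (u * (s ^ (-p) * t ^ p)) ^ (1 - p) * (v * (s ^ (1 - p) * t ^ (p - 1))) ^ p
      = u ^ (1 - p) * v ^ p := by
    rw [← Real.exp_log hs, ← Real.exp_log ht, ← Real.exp_log hu, ← Real.exp_log hv]
    simp only [← Real.exp_add, Real.rpow_def_of_pos (Real.exp_pos _), Real.log_exp]
    congr 1
    ring
  rw [key] at hgm
  calc u ^ (1 - p) * v ^ p ≤ _ := hgm
    _ = u * (1 - p) * s ^ (-p) * t ^ p + v * (s ^ (1 - p) * (p * t ^ (p - 1))) := by ring
    _ = _ := by simp only [Pi.add_apply]; ring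

lemma zmod4_sum (f : ZMod 4 → ℝ) : ∑ i : ZMod 4, f i = f 0 + f 1 + f 2 + f 3 := by
  show ∑ i : Fin 4, f i = _
  exact Fin.sum_univ_four f

/-- Off-diagonal term for a square `x₁,x₂,x₃,x₄` (vertices indexed cyclically by
`ZMod 4`, `gᵢ = ψ(x_{i+1}) - ψ(xᵢ)`) in a `d`-regular graph with uniform measure
`μ`: the decomposition of `B^off_□(ρ,ψ)` into nonnegative terms, and
`B^off_□(ρ,ψ) ≥ 0`. -/
theorem square_offdiag_decomposition (μ d : ℝ) (hμ : 0 < μ) (hd : 0 < d)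
    (ρ : ZMod 4 → ℝ) (hρ : ∀ i, 0 < ρ i) (ψ : ZMod 4 → ℝ) :
    (μ / d^2) * ∑ i : ZMod 4,
        ((1/2) * (ψ (i+1) - ψ i)^2 *
            (logMean₁ (ρ i) (ρ (i+1)) * (ρ (i-1) - ρ i)
              + logMean₂ (ρ i) (ρ (i+1)) * (ρ (i+2) - ρ (i+1)))
          - (ψ (i+1) - ψ i) * ((ψ (i+2) - ψ (i+1)) + (ψ i - ψ (i-1)))
              * logMean (ρ i) (ρ (i+1)))
      = (μ / (2*d^2)) * ((ψ 1 - ψ 0) + (ψ 3 - ψ 2))^2 *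
            (∑ i : ZMod 4, logMean (ρ i) (ρ (i+1)))
        + (μ / (2*d^2)) * ∑ i : ZMod 4, (ψ (i+1) - ψ i)^2 *
            logMeanDeficit (ρ i) (ρ (i+1)) (ρ (i-1)) (ρ (i+2)) ∧
    (μ / d^2) * ∑ i : ZMod 4,
        ((1/2) * (ψ (i+1) - ψ i)^2 *
            (logMean₁ (ρ i) (ρ (i+1)) * (ρ (i-1) - ρ i)
              + logMean₂ (ρ i) (ρ (i+1)) * (ρ (i+2) - ρ (i+1)))
          - (ψ (i+1) - ψ i) * ((ψ (i+2) - ψ (i+1)) + (ψ i - ψ (i-1)))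
              * logMean (ρ i) (ρ (i+1))) ≥ 0 := by
  have e01 : ((0:ZMod 4)+1) = 1 := rfl
  have e11 : ((1:ZMod 4)+1) = 2 := rfl
  have e21 : ((2:ZMod 4)+1) = 3 := rfl
  have e31 : ((3:ZMod 4)+1) = 0 := rfl
  have m0 : ((0:ZMod 4)-1) = 3 := rfl
  have m1 : ((1:ZMod 4)-1) = 0 := rfl
  have m2 : ((2:ZMod 4)-1) = 1 := rfl
  have m3 : ((3:ZMod 4)-1) = 2 := rfl
  have p0 : ((0:ZMod 4)+2) = 2 := rfl
  have p1 : ((1:ZMod 4)+2) = 3 := rfl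
  have p2 : ((2:ZMod 4)+2) = 0 := rfl
  have p3 : ((3:ZMod 4)+2) = 1 := rfl
  have E0 := euler_logMean (hρ 0) (hρ 1)
  have E1 := euler_logMean (hρ 1) (hρ 2)
  have E2 := euler_logMean (hρ 2) (hρ 3)
  have E3 := euler_logMean (hρ 3) (hρ 0)
  have sym0 := logMean_symm (ρ 3) (ρ 2)
  have sym1 := logMean_symm (ρ 0) (ρ 3)
  have sym2 := logMean_symm (ρ 1) (ρ 0)
  have sym3 := logMean_symm (ρ 2) (ρ 1)
  have heq : (μ / d^2) * ∑ i : ZMod 4,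
        ((1/2) * (ψ (i+1) - ψ i)^2 *
            (logMean₁ (ρ i) (ρ (i+1)) * (ρ (i-1) - ρ i)
              + logMean₂ (ρ i) (ρ (i+1)) * (ρ (i+2) - ρ (i+1)))
          - (ψ (i+1) - ψ i) * ((ψ (i+2) - ψ (i+1)) + (ψ i - ψ (i-1)))
              * logMean (ρ i) (ρ (i+1)))
      = (μ / (2*d^2)) * ((ψ 1 - ψ 0) + (ψ 3 - ψ 2))^2 *
            (∑ i : ZMod 4, logMean (ρ i) (ρ (i+1)))
        + (μ / (2*d^2)) * ∑ i : ZMod 4, (ψ (i+1) - ψ i)^2 *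
            logMeanDeficit (ρ i) (ρ (i+1)) (ρ (i-1)) (ρ (i+2)) := by
    rw [zmod4_sum, zmod4_sum, zmod4_sum]
    simp only [e01, e11, e21, e31, m0, m1, m2, m3, p0, p1, p2, p3, logMeanDeficit,
      sym0, sym1, sym2, sym3]
    linear_combination (-(μ/(2*d^2)) * (ψ 1 - ψ 0)^2) * E0
      + (-(μ/(2*d^2)) * (ψ 2 - ψ 1)^2) * E1
      + (-(μ/(2*d^2)) * (ψ 3 - ψ 2)^2) * E2
      + (-(μ/(2*d^2)) * (ψ 0 - ψ 3)^2) * E3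
  refine ⟨heq, ?_⟩
  rw [heq]
  have hc : 0 ≤ μ / (2*d^2) := by positivity
  have hθ : ∀ i : ZMod 4, 0 ≤ logMean (ρ i) (ρ (i+1)) :=
    fun i => logMean_nonneg (hρ i) (hρ (i+1))
  have hD : ∀ i : ZMod 4, 0 ≤ logMeanDeficit (ρ i) (ρ (i+1)) (ρ (i-1)) (ρ (i+2)) :=
    fun i => logMeanDeficit_nonneg (hρ i) (hρ (i+1)) (hρ (i-1)) (hρ (i+2))
  have h1 : 0 ≤ (μ / (2*d^2)) * ((ψ 1 - ψ 0) + (ψ 3 - ψ 2))^2 *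
      (∑ i : ZMod 4, logMean (ρ i) (ρ (i+1))) := by
    apply mul_nonneg (by positivity)
    exact Finset.sum_nonneg fun i _ => hθ i
  have h2 : 0 ≤ (μ / (2*d^2)) * ∑ i : ZMod 4, (ψ (i+1) - ψ i)^2 *
      logMeanDeficit (ρ i) (ρ (i+1)) (ρ (i-1)) (ρ (i+2)) := by
    apply mul_nonneg hc
    exact Finset.sum_nonneg fun i _ => mul_nonneg (sq_nonneg _) (hD i)
  linarith
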